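/- Let M be a finite MDP with alarm region, let x_0 ∉ X_a be the initial state, and let Δ_1,…,Δ_T ∈ [0,1]. Then the supremum of J_M(π) over all history-dependent policies π of M satisfying, for every i ∈ {1,…,T}, P^π(|{t ∈ {0,…,T} : X_t ∈ X_a}| ≥ i) ≤ Δ_i, equals the supremum of Ĵ(π̂) over all Markov policies π̂ of the counting augmented MDP of M satisfying P^π̂(Y_T ≥ i) ≤ Δ_i for every i ∈ {1,…,T}. -/

import Mathlib

/- Common framework: finite MDPs with alarm region, trajectories,
   history-dependent policies, trajectory laws, objectives. -/

attribute [local instance] Classical.propDecidable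

noncomputable section

/-- A finite MDP with alarm region `Xa`, horizon `T ≥ 1`, transition pmf `P`,
running rewards `r` and terminal reward `rT`. -/
structure MDP (X A : Type) [Fintype X] [Fintype A] where
  T : ℕ
  hT : 1 ≤ T
  P : X → A → X → ℝ
  P_nonneg : ∀ x a x', 0 ≤ P x a x'
  P_sum : ∀ x a, ∑ x', P x a x' = 1
  r : Fin T → X → A → ℝ
  rT : X → ℝ
  Xa : Set X

variable {X A : Type} [Fintype X] [Fintype A]

/-- A trajectory `(x₀,…,x_T, a₀,…,a_{T-1})`. -/
abbrev Traj (M : MDP X A) := (Fin (M.T + 1) → X) × (Fin M.T → A)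

/-- A history-dependent randomized policy: at each time `t < T` it maps the
history `(x₀,…,x_t, a₀,…,a_{t-1})` to a pmf on actions. -/
structure HistPolicy (M : MDP X A) where
  π : (t : Fin M.T) → (Fin (t.val + 1) → X) → (Fin t.val → A) → A → ℝ
  nonneg : ∀ t xs as a, 0 ≤ π t xs as a
  sum_one : ∀ t xs as, ∑ a, π t xs as a = 1

/-- A policy is Markov if at each time it depends only on the current state. -/
def IsMarkov {M : MDP X A} (p : HistPolicy M) : Prop :=
  ∀ (t : Fin M.T) (xs xs' : Fin (t.val + 1) → X) (as as' : Fin t.val → A),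
    xs (Fin.last t.val) = xs' (Fin.last t.val) → p.π t xs as = p.π t xs' as'

/-- The state part of the history at time `t` determined by a trajectory. -/
def histStates {M : MDP X A} (τ : Traj M) (t : Fin M.T) : Fin (t.val + 1) → X :=
  fun i => τ.1 (Fin.castLE (by have := t.isLt; omega) i)

/-- The action part of the history at time `t` determined by a trajectory. -/
def histActs {M : MDP X A} (τ : Traj M) (t : Fin M.T) : Fin t.val → A :=
  fun i => τ.2 (Fin.castLE (by have := t.isLt; omega) i)

/-- The probability mass of a trajectory under policy `p` with initial state `x0`. -/
def trajProb (M : MDP X A) (p : HistPolicy M) (x0 : X) (τ : Traj M) : ℝ :=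
  (if τ.1 0 = x0 then (1 : ℝ) else 0) *
    ∏ t : Fin M.T,
      p.π t (histStates τ t) (histActs τ t) (τ.2 t) *
        M.P (τ.1 t.castSucc) (τ.2 t) (τ.1 t.succ)

/-- Probability of an event (a set of trajectories) under the trajectory law. -/
def probEvent (M : MDP X A) (p : HistPolicy M) (x0 : X) (E : Traj M → Prop) : ℝ :=
  ∑ τ : Traj M, if E τ then trajProb M p x0 τ else 0

/-- The objective `J_M(π) = E[Σ_t r_t(X_t,A_t) + r_T(X_T)]`. -/
def J (M : MDP X A) (p : HistPolicy M) (x0 : X) : ℝ :=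
  ∑ τ : Traj M, trajProb M p x0 τ *
    (∑ t : Fin M.T, M.r t (τ.1 t.castSucc) (τ.2 t) + M.rT (τ.1 (Fin.last M.T)))

private lemma ite_nonneg'' {c : Prop} [Decidable c] {v : ℝ} (h : 0 ≤ v) :
    0 ≤ if c then v else 0 := by
  split
  · exact h
  · exact le_rfl
/-- The counting augmented MDP: the extra `Fin (T+1)` state records the number
of alarms triggered so far (saturating at `T`). -/
def countAug (M : MDP X A) : MDP (X × Fin (M.T + 1)) A where
  T := M.T
  hT := M.hT
  P := fun s a s' =>
    if s'.2 = (⟨min (s.2.val + (if s'.1 ∈ M.Xa then 1 else 0)) M.T,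
        by omega⟩ : Fin (M.T + 1)) then M.P s.1 a s'.1 else 0
  P_nonneg := fun s a s' => ite_nonneg'' (M.P_nonneg s.1 a s'.1)
  P_sum := by
    intro s a
    rw [Fintype.sum_prod_type]
    have h : ∀ x' : X,
        (∑ y : Fin (M.T + 1),
          if y = (⟨min (s.2.val + (if x' ∈ M.Xa then 1 else 0)) M.T,
              by omega⟩ : Fin (M.T + 1)) then M.P s.1 a x' else 0)
          = M.P s.1 a x' := by
      intro x'; simp
    rw [Finset.sum_congr rfl fun x' _ => h x']
    exact M.P_sum s.1 a
  r := fun t s a => M.r t s.1 a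
  rT := fun s => M.rT s.1
  Xa := {s | s.1 ∈ M.Xa}
section Part1
variable {X A : Type} [Fintype X] [Fintype A]

private lemma sum_fn_snoc {β : Type} [Fintype β] (n : ℕ) (F : (Fin (n+1) → β) → ℝ) :
    ∑ f : Fin (n+1) → β, F f = ∑ g : Fin n → β, ∑ y : β, F (Fin.snoc g y) := by
  rw [← Equiv.sum_comp (Fin.snocEquiv (fun _ => β)) F, Fintype.sum_prod_type, Finset.sum_comm]
  rfl

private lemma snoc_castLE {β : Sort*} {n m : ℕ} (f : Fin n → β) (y : β) (h : m ≤ n)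
    (h' : m ≤ n + 1) (i : Fin m) :
    (Fin.snoc f y : Fin (n+1) → β) (Fin.castLE h' i) = f (Fin.castLE h i) := by
  have : Fin.castLE h' i = Fin.castSucc (Fin.castLE h i) := Fin.ext rfl
  rw [this, Fin.snoc_castSucc]

private lemma castLE_self {n : ℕ} (h : n ≤ n) (i : Fin n) : Fin.castLE h i = i := Fin.ext rfl

/-- closed-form history (prefix) probability -/
def hpf (N : MDP X A) (x0 : X) (p : HistPolicy N) (t : ℕ) (ht : t ≤ N.T)
    (xs : Fin (t+1) → X) (as : Fin t → A) : ℝ :=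
  (if xs 0 = x0 then (1:ℝ) else 0) *
    ∏ s : Fin t,
      p.π ⟨s.1, lt_of_lt_of_le s.isLt ht⟩
          (fun i => xs (Fin.castLE (Nat.succ_le_succ (le_of_lt s.isLt)) i))
          (fun i => as (Fin.castLE (le_of_lt s.isLt) i)) (as s) *
        N.P (xs s.castSucc) (as s) (xs s.succ)

lemma trajProb_eq_hpf (M : MDP X A) (p : HistPolicy M) (x0 : X) (τ : Traj M) :
    trajProb M p x0 τ = hpf M x0 p M.T le_rfl τ.1 τ.2 := rfl
end Part1
section Part2
variable {X A : Type} [Fintype X] [Fintype A]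

lemma hpf_nonneg (N : MDP X A) (x0 : X) (p : HistPolicy N) (t : ℕ) (ht : t ≤ N.T)
    (xs : Fin (t+1) → X) (as : Fin t → A) : 0 ≤ hpf N x0 p t ht xs as := by
  unfold hpf
  apply mul_nonneg
  · split <;> norm_num
  · exact Finset.prod_nonneg fun s _ => mul_nonneg (p.nonneg _ _ _ _) (N.P_nonneg _ _ _)

lemma hpf_snoc (N : MDP X A) (x0 : X) (p : HistPolicy N) (t : ℕ) (ht : t < N.T)
    (ht' : t + 1 ≤ N.T) (xs : Fin (t+1) → X) (as : Fin t → A) (x' : X) (a : A) :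
    hpf N x0 p (t+1) ht' (Fin.snoc xs x') (Fin.snoc as a) =
      hpf N x0 p t (le_of_lt ht) xs as *
        (p.π ⟨t, ht⟩ xs as a * N.P (xs (Fin.last t)) a x') := by
  unfold hpf
  rw [Fin.prod_univ_castSucc]
  have h0 : (Fin.snoc xs x' : Fin (t+2) → X) 0 = xs 0 := by
    have : (0 : Fin (t+2)) = Fin.castSucc 0 := rfl
    rw [this, Fin.snoc_castSucc]
  rw [h0]
  rw [mul_assoc]
  congr 1
  congr 1
  · apply Finset.prod_congr rfl
    intro s _
    congr 1
    · simp only [Fin.coe_castSucc, snoc_castLE _ _ (Nat.succ_le_succ (le_of_lt s.isLt)),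
        snoc_castLE _ _ (le_of_lt s.isLt), Fin.snoc_castSucc]
    · simp only [Fin.succ_castSucc, Fin.snoc_castSucc]
  · congr 1
    · simp only [Fin.val_last]
      congr 1
      · funext i
        exact snoc_castLE _ _ le_rfl _ i |>.trans (congrArg xs (castLE_self _ i))
      · funext i
        exact snoc_castLE _ _ le_rfl _ i |>.trans (congrArg as (castLE_self _ i))
      · exact Fin.snoc_last _ _
    · simp only [Fin.succ_last, Fin.snoc_last, Fin.snoc_castSucc]
end Part2
section Part3
variable {X A : Type} [Fintype X] [Fintype A]

lemma sum_hist_succ (t : ℕ) (F : (Fin (t+2) → X) → (Fin (t+1) → A) → ℝ) :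
    (∑ xs : Fin (t+2) → X, ∑ as : Fin (t+1) → A, F xs as)
      = ∑ xs : Fin (t+1) → X, ∑ as : Fin t → A, ∑ a : A, ∑ x' : X,
          F (Fin.snoc xs x') (Fin.snoc as a) := by
  rw [sum_fn_snoc (n := t+1) (F := fun xs => ∑ as : Fin (t+1) → A, F xs as)]
  apply Finset.sum_congr rfl; intro xs _
  rw [Finset.sum_comm]
  rw [sum_fn_snoc (n := t) (F := fun as => ∑ x' : X, F (Fin.snoc xs x') as)]

private lemma collapse1 {c : ℝ} {f : A → ℝ} {h : A → X → ℝ} {g : A → X → ℝ}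
    (hg : ∀ a x, g a x = c * (f a * h a x)) :
    (∑ a : A, ∑ x : X, g a x) = c * ∑ a : A, f a * ∑ x : X, h a x := by
  simp only [Finset.mul_sum]
  exact Finset.sum_congr rfl fun a _ => Finset.sum_congr rfl fun x _ => hg a x

lemma sum_hpf_init (N : MDP X A) (x0 : X) (p : HistPolicy N) (t : ℕ) (ht : t < N.T)
    (ht' : t + 1 ≤ N.T) (F : (Fin (t+1) → X) → (Fin t → A) → ℝ) :
    (∑ xs : Fin (t+2) → X, ∑ as : Fin (t+1) → A, hpf N x0 p (t+1) ht' xs as *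
        F (fun i => xs i.castSucc) (fun i => as i.castSucc))
      = ∑ xs : Fin (t+1) → X, ∑ as : Fin t → A,
          hpf N x0 p t (le_of_lt ht) xs as * F xs as := by
  rw [sum_hist_succ]
  apply Finset.sum_congr rfl; intro xs _
  apply Finset.sum_congr rfl; intro as _
  have key : ∀ (a : A) (x' : X),
      hpf N x0 p (t+1) ht' (Fin.snoc xs x') (Fin.snoc as a) *
        F (fun i => (Fin.snoc xs x' : Fin (t+2) → X) i.castSucc)
          (fun i => (Fin.snoc as a : Fin (t+1) → A) i.castSucc)
      = (hpf N x0 p t (le_of_lt ht) xs as * F xs as) *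
          (p.π ⟨t, ht⟩ xs as a * N.P (xs (Fin.last t)) a x') := by
    intro a x'
    rw [hpf_snoc N x0 p t ht ht']
    simp only [Fin.snoc_castSucc]
    ring
  rw [collapse1 (f := fun a => p.π ⟨t, ht⟩ xs as a)
      (h := fun a x' => N.P (xs (Fin.last t)) a x') (fun a x' => key a x')]
  have : ∀ a : A, (∑ x' : X, N.P (xs (Fin.last t)) a x') = 1 := fun a => N.P_sum _ _
  rw [Finset.sum_congr rfl fun a _ => by rw [this a, mul_one], p.sum_one]
  ring

lemma sum_hpf_step (N : MDP X A) (x0 : X) (p : HistPolicy N) (t : ℕ) (ht : t < N.T)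
    (ht' : t + 1 ≤ N.T) (g : X → A → X → ℝ) :
    (∑ xs : Fin (t+2) → X, ∑ as : Fin (t+1) → A, hpf N x0 p (t+1) ht' xs as *
        g (xs (Fin.last t).castSucc) (as (Fin.last t)) (xs (Fin.last (t+1))))
      = ∑ xs : Fin (t+1) → X, ∑ as : Fin t → A, hpf N x0 p t (le_of_lt ht) xs as *
          ∑ a : A, p.π ⟨t, ht⟩ xs as a *
            ∑ x' : X, N.P (xs (Fin.last t)) a x' * g (xs (Fin.last t)) a x' := by
  rw [sum_hist_succ]
  apply Finset.sum_congr rfl; intro xs _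
  apply Finset.sum_congr rfl; intro as _
  have key : ∀ (a : A) (x' : X),
      hpf N x0 p (t+1) ht' (Fin.snoc xs x') (Fin.snoc as a) *
        g ((Fin.snoc xs x' : Fin (t+2) → X) (Fin.last t).castSucc)
          ((Fin.snoc as a : Fin (t+1) → A) (Fin.last t))
          ((Fin.snoc xs x' : Fin (t+2) → X) (Fin.last (t+1)))
      = hpf N x0 p t (le_of_lt ht) xs as *
          (p.π ⟨t, ht⟩ xs as a *
            (N.P (xs (Fin.last t)) a x' * g (xs (Fin.last t)) a x')) := by
    intro a x'
    rw [hpf_snoc N x0 p t ht ht']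
    simp only [Fin.snoc_castSucc, Fin.snoc_last]
    ring
  rw [collapse1 (c := hpf N x0 p t (le_of_lt ht) xs as)
      (f := fun a => p.π ⟨t, ht⟩ xs as a)
      (h := fun a x' => N.P (xs (Fin.last t)) a x' * g (xs (Fin.last t)) a x')
      (fun a x' => key a x')]
end Part3
set_option linter.unusedSectionVars false
set_option linter.unusedVariables false
section Part4
variable {X A : Type} [Fintype X] [Fintype A]

def trX {t s : ℕ} (h : t + 1 ≤ s + 1) (xs : Fin (s+1) → X) : Fin (t+1) → X :=
  fun i => xs (Fin.castLE h i)
def trA {t s : ℕ} (h : t ≤ s) (as : Fin s → A) : Fin t → A :=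
  fun i => as (Fin.castLE h i)

lemma trX_refl {t : ℕ} (h : t + 1 ≤ t + 1) (xs : Fin (t+1) → X) : trX h xs = xs :=
  funext fun i => congrArg xs (Fin.ext rfl)
lemma trA_refl {t : ℕ} (h : t ≤ t) (as : Fin t → A) : trA h as = as :=
  funext fun i => congrArg as (Fin.ext rfl)
lemma trX_step {t s : ℕ} (h : t + 1 ≤ s + 1) (h' : t + 1 ≤ s + 2) (xs : Fin (s+2) → X) :
    trX h' xs = trX h (fun i => xs i.castSucc) :=
  funext fun i => congrArg xs (Fin.ext rfl)
lemma trA_step {t s : ℕ} (h : t ≤ s) (h' : t ≤ s + 1) (as : Fin (s+1) → A) :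
    trA h' as = trA h (fun i => as i.castSucc) :=
  funext fun i => congrArg as (Fin.ext rfl)

lemma sum_hpf_trunc (N : MDP X A) (x0 : X) (p : HistPolicy N) {t s : ℕ} (h : t ≤ s)
    (hs : s ≤ N.T) (F : (Fin (t+1) → X) → (Fin t → A) → ℝ) :
    (∑ xs : Fin (s+1) → X, ∑ as : Fin s → A,
        hpf N x0 p s hs xs as * F (trX (Nat.succ_le_succ h) xs) (trA h as))
      = ∑ xs : Fin (t+1) → X, ∑ as : Fin t → A, hpf N x0 p t (h.trans hs) xs as * F xs as := by
  induction s, h using Nat.le_induction with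
  | base =>
    simp only [trX_refl, trA_refl]
  | succ s hts ih =>
    have hlt : s < N.T := hs
    have e1 : (∑ xs : Fin (s+2) → X, ∑ as : Fin (s+1) → A,
        hpf N x0 p (s+1) hs xs as * F (trX (Nat.succ_le_succ (hts.trans (Nat.le_succ s))) xs)
          (trA (hts.trans (Nat.le_succ s)) as))
        = ∑ xs : Fin (s+2) → X, ∑ as : Fin (s+1) → A,
          hpf N x0 p (s+1) hs xs as *
            (fun xs' as' => F (trX (Nat.succ_le_succ hts) xs') (trA hts as'))
              (fun i => xs i.castSucc) (fun i => as i.castSucc) := by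
      apply Finset.sum_congr rfl; intro xs _
      apply Finset.sum_congr rfl; intro as _
      rw [trX_step (Nat.succ_le_succ hts), trA_step hts]
    rw [e1]
    exact (sum_hpf_init N x0 p s hlt hs fun xs' as' =>
      F (trX (Nat.succ_le_succ hts) xs') (trA hts as')).trans (ih (le_of_lt hlt))
end Part4
section Part5
variable {X A : Type} [Fintype X] [Fintype A]

private lemma sum_swap3 {α β γ : Type} [Fintype α] [Fintype β] [Fintype γ]
    (G : α → β → γ → ℝ) :
    (∑ x : α, ∑ c : β, ∑ d : γ, G x c d) = ∑ c, ∑ d, ∑ x, G x c d :=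
  (Finset.sum_comm).trans (Finset.sum_congr rfl fun c _ => Finset.sum_comm)

private lemma sum_swap4 {α β γ δ : Type} [Fintype α] [Fintype β] [Fintype γ] [Fintype δ]
    (G : α → β → γ → δ → ℝ) :
    (∑ x : α, ∑ a : β, ∑ c : γ, ∑ d : δ, G x a c d) = ∑ c, ∑ d, ∑ x, ∑ a, G x a c d :=
  calc (∑ x : α, ∑ a : β, ∑ c : γ, ∑ d : δ, G x a c d)
      = ∑ x : α, ∑ c : γ, ∑ a : β, ∑ d : δ, G x a c d :=
        Finset.sum_congr rfl fun x _ => Finset.sum_comm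
    _ = ∑ c : γ, ∑ x : α, ∑ a : β, ∑ d : δ, G x a c d := Finset.sum_comm
    _ = ∑ c : γ, ∑ x : α, ∑ d : δ, ∑ a : β, G x a c d :=
        Finset.sum_congr rfl fun c _ => Finset.sum_congr rfl fun x _ => Finset.sum_comm
    _ = ∑ c : γ, ∑ d : δ, ∑ x : α, ∑ a : β, G x a c d :=
        Finset.sum_congr rfl fun c _ => Finset.sum_comm

/-- marginal distribution of the state at time `t` -/
def nuD (N : MDP X A) (x0 : X) (p : HistPolicy N) (t : ℕ) (ht : t ≤ N.T) (x : X) : ℝ :=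
  ∑ xs : Fin (t+1) → X, ∑ as : Fin t → A,
    hpf N x0 p t ht xs as * (if xs (Fin.last t) = x then 1 else 0)

/-- joint marginal of state and action at time `t` -/
def muD (N : MDP X A) (x0 : X) (p : HistPolicy N) (t : ℕ) (ht : t < N.T) (x : X) (a : A) : ℝ :=
  ∑ xs : Fin (t+2) → X, ∑ as : Fin (t+1) → A,
    hpf N x0 p (t+1) ht xs as *
      (if xs (Fin.last t).castSucc = x ∧ as (Fin.last t) = a then 1 else 0)

lemma nuD_nonneg (N : MDP X A) (x0 : X) (p : HistPolicy N) (t : ℕ) (ht : t ≤ N.T) (x : X) :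
    0 ≤ nuD N x0 p t ht x :=
  Finset.sum_nonneg fun _ _ => Finset.sum_nonneg fun _ _ =>
    mul_nonneg (hpf_nonneg _ _ _ _ _ _ _) (by split <;> norm_num)

lemma muD_nonneg (N : MDP X A) (x0 : X) (p : HistPolicy N) (t : ℕ) (ht : t < N.T) (x : X) (a : A) :
    0 ≤ muD N x0 p t ht x a :=
  Finset.sum_nonneg fun _ _ => Finset.sum_nonneg fun _ _ =>
    mul_nonneg (hpf_nonneg _ _ _ _ _ _ _) (by split <;> norm_num)

lemma hpf_zero (N : MDP X A) (x0 : X) (p q : HistPolicy N) (ht : 0 ≤ N.T)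
    (xs : Fin 1 → X) (as : Fin 0 → A) :
    hpf N x0 p 0 ht xs as = hpf N x0 q 0 ht xs as := by
  unfold hpf
  simp

lemma nuD_zero (N : MDP X A) (x0 : X) (p q : HistPolicy N) (ht : 0 ≤ N.T) (x : X) :
    nuD N x0 p 0 ht x = nuD N x0 q 0 ht x := by
  unfold nuD
  exact Finset.sum_congr rfl fun xs _ => Finset.sum_congr rfl fun as _ => by
    rw [hpf_zero N x0 p q ht xs as]

/-- F4 : one-step formula for `muD`. -/
lemma muD_eq (N : MDP X A) (x0 : X) (p : HistPolicy N) (t : ℕ) (ht : t < N.T) (x : X) (a : A) :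
    muD N x0 p t ht x a
      = ∑ xs : Fin (t+1) → X, ∑ as : Fin t → A, hpf N x0 p t (le_of_lt ht) xs as *
          ((if xs (Fin.last t) = x then 1 else 0) * p.π ⟨t, ht⟩ xs as a) := by
  unfold muD
  rw [sum_hpf_step N x0 p t ht ht
    (g := fun y b _ => if y = x ∧ b = a then (1:ℝ) else 0)]
  apply Finset.sum_congr rfl; intro xs _
  apply Finset.sum_congr rfl; intro as _
  congr 1
  have h1 : ∀ b : A, (∑ x' : X, N.P (xs (Fin.last t)) b x' *
      (if xs (Fin.last t) = x ∧ b = a then (1:ℝ) else 0))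
      = (if xs (Fin.last t) = x ∧ b = a then (1:ℝ) else 0) := by
    intro b
    rw [← Finset.sum_mul, N.P_sum, one_mul]
  rw [Finset.sum_congr rfl fun b _ => by rw [h1 b]]
  by_cases hx : xs (Fin.last t) = x
  · simp only [hx, true_and]
    rw [Finset.sum_congr rfl (g := fun b => if b = a then p.π ⟨t, ht⟩ xs as b else 0)
        (fun b _ => by by_cases hb : b = a <;> simp [hb])]
    simp [Finset.sum_ite_eq']
  · simp [hx]

/-- F3 : the action-marginal of `muD` is `nuD`. -/
lemma sum_muD (N : MDP X A) (x0 : X) (p : HistPolicy N) (t : ℕ) (ht : t < N.T) (x : X) :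
    (∑ a : A, muD N x0 p t ht x a) = nuD N x0 p t (le_of_lt ht) x := by
  rw [Finset.sum_congr rfl fun a _ => muD_eq N x0 p t ht x a, sum_swap3]
  unfold nuD
  apply Finset.sum_congr rfl; intro xs _
  apply Finset.sum_congr rfl; intro as _
  rw [← Finset.mul_sum, ← Finset.mul_sum, p.sum_one, mul_one]

/-- F2 : Chapman–Kolmogorov for the marginals. -/
lemma nuD_succ (N : MDP X A) (x0 : X) (p : HistPolicy N) (t : ℕ) (ht : t < N.T)
    (ht' : t + 1 ≤ N.T) (x' : X) :
    nuD N x0 p (t+1) ht' x' = ∑ x : X, ∑ a : A, muD N x0 p t ht x a * N.P x a x' := by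
  have rhs : (∑ x : X, ∑ a : A, muD N x0 p t ht x a * N.P x a x')
      = ∑ xs : Fin (t+1) → X, ∑ as : Fin t → A, hpf N x0 p t (le_of_lt ht) xs as *
          ∑ a : A, p.π ⟨t, ht⟩ xs as a * N.P (xs (Fin.last t)) a x' := by
    have e0 : ∀ (x : X) (a : A), muD N x0 p t ht x a * N.P x a x'
        = ∑ xs : Fin (t+1) → X, ∑ as : Fin t → A, hpf N x0 p t (le_of_lt ht) xs as *
            ((if xs (Fin.last t) = x then 1 else 0) * (p.π ⟨t, ht⟩ xs as a * N.P x a x')) := by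
      intro x a
      rw [muD_eq N x0 p t ht x a, Finset.sum_mul]
      refine Finset.sum_congr rfl fun xs _ => ?_
      rw [Finset.sum_mul]
      exact Finset.sum_congr rfl fun as _ => by ring
    rw [Finset.sum_congr rfl fun x _ => Finset.sum_congr rfl fun a _ => e0 x a]
    rw [sum_swap4]
    refine Finset.sum_congr rfl fun xs _ => Finset.sum_congr rfl fun as _ => ?_
    rw [Finset.mul_sum]
    rw [Finset.sum_comm]
    refine Finset.sum_congr rfl fun a _ => ?_
    rw [Finset.sum_congr rfl (g := fun x => if xs (Fin.last t) = x then
        hpf N x0 p t (le_of_lt ht) xs as * (p.π ⟨t, ht⟩ xs as a * N.P x a x') else 0)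
      (fun x _ => by by_cases hx : xs (Fin.last t) = x <;> simp [hx])]
    rw [Finset.sum_ite_eq]
    simp
  rw [rhs]
  unfold nuD
  rw [sum_hpf_step N x0 p t ht ht' (g := fun _ _ z => if z = x' then (1:ℝ) else 0)]
  apply Finset.sum_congr rfl; intro xs _
  apply Finset.sum_congr rfl; intro as _
  congr 1
  apply Finset.sum_congr rfl; intro a _
  congr 1
  rw [Finset.sum_congr rfl (g := fun z => if z = x' then N.P (xs (Fin.last t)) a z else 0)
    (fun z _ => by by_cases hz : z = x' <;> simp [hz])]
  simp [Finset.sum_ite_eq']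
end Part5
section Part6
variable {X A : Type} [Fintype X] [Fintype A]

private lemma collapse_pair {u : X} {v : A} (w : X → A → ℝ) :
    (∑ x : X, ∑ a : A, if u = x ∧ v = a then w x a else 0) = w u v := by
  have h1 : ∀ x : X, (∑ a : A, if u = x ∧ v = a then w x a else 0)
      = if u = x then w x v else 0 := by
    intro x
    by_cases hx : u = x
    · simp only [hx, true_and]
      rw [Finset.sum_ite_eq]
      simp
    · simp [hx]
  rw [Finset.sum_congr rfl fun x _ => h1 x, Finset.sum_ite_eq]
  simp

lemma probEvent_final (M : MDP X A) (p : HistPolicy M) (x0 : X) (g : X → Prop) :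
    probEvent M p x0 (fun τ => g (τ.1 (Fin.last M.T)))
      = ∑ x : X, if g x then nuD M x0 p M.T le_rfl x else 0 := by
  unfold probEvent
  rw [Fintype.sum_prod_type]
  have key : ∀ (xs : Fin (M.T+1) → X) (as : Fin M.T → A),
      (if g (xs (Fin.last M.T)) then trajProb M p x0 (xs, as) else 0)
        = ∑ x : X, if xs (Fin.last M.T) = x
            then (if g x then hpf M x0 p M.T le_rfl xs as else 0) else 0 := by
    intro xs as
    rw [Finset.sum_ite_eq]
    simp only [Finset.mem_univ, if_true]
    rfl
  have step : (∑ xs : Fin (M.T+1) → X, ∑ as : Fin M.T → A,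
      if g ((xs, as).1 (Fin.last M.T)) then trajProb M p x0 (xs, as) else 0)
      = ∑ xs : Fin (M.T+1) → X, ∑ as : Fin M.T → A, ∑ x : X,
          if xs (Fin.last M.T) = x
            then (if g x then hpf M x0 p M.T le_rfl xs as else 0) else 0 :=
    Finset.sum_congr rfl fun xs _ => Finset.sum_congr rfl fun as _ => key xs as
  rw [step, ← sum_swap3 (G := fun x xs as => if xs (Fin.last M.T) = x
      then (if g x then hpf M x0 p M.T le_rfl xs as else 0) else 0)]
  refine Finset.sum_congr rfl fun x _ => ?_
  unfold nuD
  by_cases hg : g x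
  · simp only [hg, if_true]
    refine Finset.sum_congr rfl fun xs _ => Finset.sum_congr rfl fun as _ => ?_
    split_ifs with h1 <;> simp
  · simp only [hg, if_false]
    apply Finset.sum_eq_zero; intro xs _
    apply Finset.sum_eq_zero; intro as _
    simp
end Part6
section Part7
variable {X A : Type} [Fintype X] [Fintype A]

set_option maxHeartbeats 1000000 in
lemma J_formula (M : MDP X A) (p : HistPolicy M) (x0 : X) :
    J M p x0 = (∑ t : Fin M.T, ∑ x : X, ∑ a : A, muD M x0 p t.1 t.isLt x a * M.r t x a)
      + ∑ x : X, nuD M x0 p M.T le_rfl x * M.rT x := by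
  have step1 : J M p x0 = ∑ xs : Fin (M.T+1) → X, ∑ as : Fin M.T → A,
      ((∑ t : Fin M.T, hpf M x0 p M.T le_rfl xs as * M.r t (xs t.castSucc) (as t)) +
        hpf M x0 p M.T le_rfl xs as * M.rT (xs (Fin.last M.T))) := by
    unfold J
    rw [Fintype.sum_prod_type]
    refine Finset.sum_congr rfl fun xs _ => Finset.sum_congr rfl fun as _ => ?_
    show trajProb M p x0 (xs, as) * _ = _
    rw [trajProb_eq_hpf, mul_add, Finset.mul_sum]
  rw [step1]
  rw [Finset.sum_congr rfl fun (xs : Fin (M.T+1) → X) (_ : xs ∈ Finset.univ) =>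
    Finset.sum_add_distrib, Finset.sum_add_distrib]
  congr 1
  · rw [← sum_swap3 (G := fun (t : Fin M.T) (xs : Fin (M.T+1) → X) (as : Fin M.T → A) =>
      hpf M x0 p M.T le_rfl xs as * M.r t (xs t.castSucc) (as t))]
    refine Finset.sum_congr rfl fun t _ => ?_
    have h : t.1 + 1 ≤ M.T := t.isLt
    have e1 : (∑ xs : Fin (M.T+1) → X, ∑ as : Fin M.T → A,
        hpf M x0 p M.T le_rfl xs as * M.r t (xs t.castSucc) (as t))
        = ∑ xs : Fin (M.T+1) → X, ∑ as : Fin M.T → A, hpf M x0 p M.T le_rfl xs as *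
            (fun (ys : Fin (t.1+2) → X) (bs : Fin (t.1+1) → A) =>
                M.r t (ys (Fin.last t.1).castSucc) (bs (Fin.last t.1)))
              (trX (Nat.succ_le_succ h) xs) (trA h as) := by
      refine Finset.sum_congr rfl fun xs _ => Finset.sum_congr rfl fun as _ => ?_
      congr 1
    have e2 : (∑ x : X, ∑ a : A, muD M x0 p t.1 t.isLt x a * M.r t x a)
        = ∑ ys : Fin (t.1+2) → X, ∑ bs : Fin (t.1+1) → A,
            hpf M x0 p (t.1+1) t.isLt ys bs *
              M.r t (ys (Fin.last t.1).castSucc) (bs (Fin.last t.1)) := by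
      unfold muD
      calc (∑ x : X, ∑ a : A, (∑ ys : Fin (t.1+2) → X, ∑ bs : Fin (t.1+1) → A,
              hpf M x0 p (t.1+1) t.isLt ys bs *
                (if ys (Fin.last t.1).castSucc = x ∧ bs (Fin.last t.1) = a then (1:ℝ) else 0))
                * M.r t x a)
          = ∑ x : X, ∑ a : A, ∑ ys : Fin (t.1+2) → X, ∑ bs : Fin (t.1+1) → A,
              (hpf M x0 p (t.1+1) t.isLt ys bs *
                (if ys (Fin.last t.1).castSucc = x ∧ bs (Fin.last t.1) = a then (1:ℝ) else 0))
                * M.r t x a := by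
            refine Finset.sum_congr rfl fun x _ => Finset.sum_congr rfl fun a _ => ?_
            rw [Finset.sum_mul]
            exact Finset.sum_congr rfl fun ys _ => by rw [Finset.sum_mul]
        _ = ∑ ys : Fin (t.1+2) → X, ∑ bs : Fin (t.1+1) → A, ∑ x : X, ∑ a : A,
              (hpf M x0 p (t.1+1) t.isLt ys bs *
                (if ys (Fin.last t.1).castSucc = x ∧ bs (Fin.last t.1) = a then (1:ℝ) else 0))
                * M.r t x a := sum_swap4 _
        _ = ∑ ys : Fin (t.1+2) → X, ∑ bs : Fin (t.1+1) → A,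
              hpf M x0 p (t.1+1) t.isLt ys bs *
                M.r t (ys (Fin.last t.1).castSucc) (bs (Fin.last t.1)) := by
            refine Finset.sum_congr rfl fun ys _ => Finset.sum_congr rfl fun bs _ => ?_
            have e3 : ∀ (x : X) (a : A), (hpf M x0 p (t.1+1) t.isLt ys bs *
                (if ys (Fin.last t.1).castSucc = x ∧ bs (Fin.last t.1) = a then (1:ℝ) else 0))
                  * M.r t x a
                = if ys (Fin.last t.1).castSucc = x ∧ bs (Fin.last t.1) = a
                    then hpf M x0 p (t.1+1) t.isLt ys bs * M.r t x a else 0 := by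
              intro x a; split_ifs <;> simp
            rw [Finset.sum_congr rfl fun x _ => Finset.sum_congr rfl fun a _ => e3 x a]
            exact collapse_pair (w := fun x a => hpf M x0 p (t.1+1) t.isLt ys bs * M.r t x a)
    refine e1.trans ?_
    refine (sum_hpf_trunc M x0 p h le_rfl (fun ys bs =>
      M.r t (ys (Fin.last t.1).castSucc) (bs (Fin.last t.1)))).trans ?_
    exact e2.symm
  · -- terminal part
    have e4 : (∑ x : X, nuD M x0 p M.T le_rfl x * M.rT x)
        = ∑ x : X, ∑ xs : Fin (M.T+1) → X, ∑ as : Fin M.T → A,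
            (hpf M x0 p M.T le_rfl xs as *
              (if xs (Fin.last M.T) = x then (1:ℝ) else 0)) * M.rT x := by
      unfold nuD
      refine Finset.sum_congr rfl fun x _ => ?_
      rw [Finset.sum_mul]
      exact Finset.sum_congr rfl fun xs _ => by rw [Finset.sum_mul]
    rw [e4, sum_swap3 (G := fun (x : X) (xs : Fin (M.T+1) → X) (as : Fin M.T → A) =>
      (hpf M x0 p M.T le_rfl xs as *
        (if xs (Fin.last M.T) = x then (1:ℝ) else 0)) * M.rT x)]
    refine Finset.sum_congr rfl fun xs _ => Finset.sum_congr rfl fun as _ => ?_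
    have e5 : ∀ x : X, (hpf M x0 p M.T le_rfl xs as *
        (if xs (Fin.last M.T) = x then (1:ℝ) else 0)) * M.rT x
        = if xs (Fin.last M.T) = x then hpf M x0 p M.T le_rfl xs as * M.rT x else 0 := by
      intro x; split_ifs <;> simp
    rw [Finset.sum_congr rfl fun x _ => e5 x, Finset.sum_ite_eq]
    simp
end Part7
section Part8
variable {X A : Type} [Fintype X] [Fintype A] [Nonempty A]

def mkval (N : MDP X A) (x0 : X) (p : HistPolicy N) (t : ℕ) (ht : t < N.T) (x : X) (a : A) : ℝ :=
  if nuD N x0 p t (le_of_lt ht) x = 0 then (Fintype.card A : ℝ)⁻¹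
  else muD N x0 p t ht x a / nuD N x0 p t (le_of_lt ht) x

lemma mkval_nonneg (N : MDP X A) (x0 : X) (p : HistPolicy N) (t : ℕ) (ht : t < N.T)
    (x : X) (a : A) : 0 ≤ mkval N x0 p t ht x a := by
  unfold mkval
  split
  · positivity
  · exact div_nonneg (muD_nonneg _ _ _ _ _ _ _) (nuD_nonneg _ _ _ _ _ _)

lemma mkval_sum (N : MDP X A) (x0 : X) (p : HistPolicy N) (t : ℕ) (ht : t < N.T) (x : X) :
    ∑ a : A, mkval N x0 p t ht x a = 1 := by
  unfold mkval
  by_cases h0 : nuD N x0 p t (le_of_lt ht) x = 0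
  · simp only [h0, if_true]
    rw [Finset.sum_const, nsmul_eq_mul, Finset.card_univ, mul_inv_cancel₀]
    exact_mod_cast Fintype.card_ne_zero
  · simp only [h0, if_false]
    rw [← Finset.sum_div, sum_muD, div_self h0]

def mkPolicy (N : MDP X A) (x0 : X) (p : HistPolicy N) : HistPolicy N where
  π t xs as a := mkval N x0 p t.1 t.isLt (xs (Fin.last t.1)) a
  nonneg t xs as a := mkval_nonneg N x0 p t.1 t.isLt (xs (Fin.last t.1)) a
  sum_one t xs as := mkval_sum N x0 p t.1 t.isLt (xs (Fin.last t.1))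

lemma mkPolicy_markov (N : MDP X A) (x0 : X) (p : HistPolicy N) :
    IsMarkov (mkPolicy N x0 p) := by
  intro t xs xs' as as' h
  funext a
  show mkval N x0 p t.1 t.isLt (xs (Fin.last t.1)) a
     = mkval N x0 p t.1 t.isLt (xs' (Fin.last t.1)) a
  rw [h]

set_option maxHeartbeats 2000000 in
lemma muD_mkPolicy (N : MDP X A) (x0 : X) (p : HistPolicy N) (t : ℕ) (ht : t < N.T)
    (x : X) (a : A) :
    muD N x0 (mkPolicy N x0 p) t ht x a
      = nuD N x0 (mkPolicy N x0 p) t (le_of_lt ht) x * mkval N x0 p t ht x a := by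
  rw [muD_eq]
  have e : ∀ (xs : Fin (t+1) → X) (as : Fin t → A),
      hpf N x0 (mkPolicy N x0 p) t (le_of_lt ht) xs as *
        ((if xs (Fin.last t) = x then (1:ℝ) else 0) *
          (mkPolicy N x0 p).π ⟨t, ht⟩ xs as a)
      = (hpf N x0 (mkPolicy N x0 p) t (le_of_lt ht) xs as *
          (if xs (Fin.last t) = x then (1:ℝ) else 0)) * mkval N x0 p t ht x a := by
    intro xs as
    show hpf N x0 (mkPolicy N x0 p) t (le_of_lt ht) xs as *
        ((if xs (Fin.last t) = x then (1:ℝ) else 0) *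
          mkval N x0 p t ht (xs (Fin.last t)) a) = _
    by_cases hx : xs (Fin.last t) = x
    · rw [hx]; ring
    · simp [hx]
  rw [Finset.sum_congr rfl fun xs _ => Finset.sum_congr rfl fun as _ => e xs as]
  calc (∑ xs : Fin (t+1) → X, ∑ as : Fin t → A,
        (hpf N x0 (mkPolicy N x0 p) t (le_of_lt ht) xs as *
          (if xs (Fin.last t) = x then (1:ℝ) else 0)) * mkval N x0 p t ht x a)
      = ∑ xs : Fin (t+1) → X, (∑ as : Fin t → A,
          hpf N x0 (mkPolicy N x0 p) t (le_of_lt ht) xs as *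
            (if xs (Fin.last t) = x then (1:ℝ) else 0)) * mkval N x0 p t ht x a :=
        Finset.sum_congr rfl fun xs _ => (Finset.sum_mul _ _ _).symm
    _ = _ := (Finset.sum_mul _ _ _).symm

set_option maxHeartbeats 2000000 in
lemma muD_p_zero (N : MDP X A) (x0 : X) (p : HistPolicy N) (t : ℕ) (ht : t < N.T) (x : X)
    (h0 : nuD N x0 p t (le_of_lt ht) x = 0) (a : A) : muD N x0 p t ht x a = 0 := by
  have hsum : (∑ a : A, muD N x0 p t ht x a) = 0 := by rw [sum_muD]; exact h0
  exact (Finset.sum_eq_zero_iff_of_nonneg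
    (fun a _ => muD_nonneg N x0 p t ht x a)).mp hsum a (Finset.mem_univ a)

set_option maxHeartbeats 2000000 in
lemma muD_mk_of_nu (N : MDP X A) (x0 : X) (p : HistPolicy N) (t : ℕ) (ht : t < N.T)
    (hnu : ∀ x, nuD N x0 (mkPolicy N x0 p) t (le_of_lt ht) x = nuD N x0 p t (le_of_lt ht) x)
    (x : X) (a : A) : muD N x0 (mkPolicy N x0 p) t ht x a = muD N x0 p t ht x a := by
  rw [muD_mkPolicy, hnu x]
  unfold mkval
  by_cases h0 : nuD N x0 p t (le_of_lt ht) x = 0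
  · rw [if_pos h0, h0, zero_mul, muD_p_zero N x0 p t ht x h0 a]
  · rw [if_neg h0, mul_div_cancel₀ _ h0]

set_option maxHeartbeats 2000000 in
lemma nuD_mk (N : MDP X A) (x0 : X) (p : HistPolicy N) :
    ∀ (t : ℕ) (ht : t ≤ N.T) (x : X),
      nuD N x0 (mkPolicy N x0 p) t ht x = nuD N x0 p t ht x := by
  intro t
  induction t with
  | zero => exact fun ht x => nuD_zero N x0 _ p ht x
  | succ t ih =>
    intro ht' x'
    have ht : t < N.T := Nat.lt_of_lt_of_le (Nat.lt_succ_self t) ht'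
    rw [nuD_succ N x0 _ t ht ht' x', nuD_succ N x0 p t ht ht' x']
    refine Finset.sum_congr rfl fun x _ => Finset.sum_congr rfl fun a _ => ?_
    rw [muD_mk_of_nu N x0 p t ht (fun y => ih (le_of_lt ht) y) x a]

set_option maxHeartbeats 2000000 in
lemma muD_mk (N : MDP X A) (x0 : X) (p : HistPolicy N) (t : ℕ) (ht : t < N.T) (x : X) (a : A) :
    muD N x0 (mkPolicy N x0 p) t ht x a = muD N x0 p t ht x a :=
  muD_mk_of_nu N x0 p t ht (fun y => nuD_mk N x0 p t (le_of_lt ht) y) x a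

set_option maxHeartbeats 2000000 in
theorem exists_markov (N : MDP X A) (x0 : X) (p : HistPolicy N) :
    ∃ q : HistPolicy N, IsMarkov q ∧ J N q x0 = J N p x0 ∧
      ∀ g : X → Prop, probEvent N q x0 (fun τ => g (τ.1 (Fin.last N.T))) =
        probEvent N p x0 (fun τ => g (τ.1 (Fin.last N.T))) := by
  refine ⟨mkPolicy N x0 p, mkPolicy_markov N x0 p, ?_, ?_⟩
  · rw [J_formula, J_formula]
    congr 1
    · refine Finset.sum_congr rfl fun t _ => Finset.sum_congr rfl fun x _ =>
        Finset.sum_congr rfl fun a _ => ?_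
      rw [muD_mk N x0 p t.1 t.isLt x a]
    · refine Finset.sum_congr rfl fun x _ => ?_
      rw [nuD_mk N x0 p N.T le_rfl x]
  · intro g
    rw [probEvent_final, probEvent_final]
    refine Finset.sum_congr rfl fun x _ => ?_
    rw [nuD_mk N x0 p N.T le_rfl x]
end Part8
section Part9
variable {X A : Type} [Fintype X] [Fintype A]

def cnt (M : MDP X A) {n : ℕ} (xs : Fin (n+1) → X) (i : Fin (n+1)) : Fin (M.T+1) :=
  ⟨min ((Finset.univ.filter
      (fun j : Fin (n+1) => j ≤ i ∧ j ≠ 0 ∧ xs j ∈ M.Xa)).card) M.T, by omega⟩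

lemma cnt_zero (M : MDP X A) {n : ℕ} (xs : Fin (n+1) → X) : cnt M xs 0 = 0 := by
  apply Fin.ext
  show min _ M.T = 0
  have : (Finset.univ.filter
      (fun j : Fin (n+1) => j ≤ 0 ∧ j ≠ 0 ∧ xs j ∈ M.Xa)) = ∅ := by
    apply Finset.filter_false_of_mem
    intro j _
    rintro ⟨h1, h2, _⟩
    exact h2 (Fin.le_zero_iff.mp h1)
  rw [this]
  simp

lemma cnt_succ (M : MDP X A) (xs : Fin (M.T+1) → X) (t : Fin M.T) :
    (cnt M xs t.succ).val
      = min ((cnt M xs t.castSucc).val + (if xs t.succ ∈ M.Xa then 1 else 0)) M.T := by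
  have hsucc0 : (t.succ : Fin (M.T+1)) ≠ 0 := by
    intro h
    have := congrArg Fin.val h
    simp [Fin.val_succ] at this
  by_cases h : xs t.succ ∈ M.Xa
  · have hins : (Finset.univ.filter
        (fun j : Fin (M.T+1) => j ≤ t.succ ∧ j ≠ 0 ∧ xs j ∈ M.Xa))
        = insert t.succ (Finset.univ.filter
            (fun j : Fin (M.T+1) => j ≤ t.castSucc ∧ j ≠ 0 ∧ xs j ∈ M.Xa)) := by
      ext j
      simp only [Finset.mem_filter, Finset.mem_insert, Finset.mem_univ, true_and]
      constructor
      · rintro ⟨h1, h2, h3⟩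
        rcases Nat.lt_or_ge j.val (t.val + 1) with hj | hj
        · exact Or.inr ⟨by rw [Fin.le_def]; simpa [Fin.coe_castSucc] using Nat.lt_succ_iff.mp hj, h2, h3⟩
        · left
          apply Fin.ext
          have : j.val ≤ t.val + 1 := by simpa [Fin.le_def, Fin.val_succ] using h1
          simp [Fin.val_succ]
          omega
      · rintro (rfl | ⟨h1, h2, h3⟩)
        · exact ⟨le_rfl, hsucc0, h⟩
        · refine ⟨?_, h2, h3⟩
          rw [Fin.le_def] at h1 ⊢
          simp only [Fin.coe_castSucc] at h1
          simp only [Fin.val_succ]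
          omega
    have hnotmem : t.succ ∉ (Finset.univ.filter
        (fun j : Fin (M.T+1) => j ≤ t.castSucc ∧ j ≠ 0 ∧ xs j ∈ M.Xa)) := by
      simp only [Finset.mem_filter, Finset.mem_univ, true_and, not_and]
      intro h1
      exfalso
      rw [Fin.le_def] at h1
      simp [Fin.val_succ, Fin.coe_castSucc] at h1
    show min _ M.T = _
    rw [hins, Finset.card_insert_of_notMem hnotmem, if_pos h]
    show min (_ + 1) M.T = min (min _ M.T + 1) M.T
    omega
  · have heq : (Finset.univ.filter
        (fun j : Fin (M.T+1) => j ≤ t.succ ∧ j ≠ 0 ∧ xs j ∈ M.Xa))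
        = (Finset.univ.filter
            (fun j : Fin (M.T+1) => j ≤ t.castSucc ∧ j ≠ 0 ∧ xs j ∈ M.Xa)) := by
      ext j
      simp only [Finset.mem_filter, Finset.mem_univ, true_and]
      constructor
      · rintro ⟨h1, h2, h3⟩
        refine ⟨?_, h2, h3⟩
        rw [Fin.le_def] at h1 ⊢
        simp only [Fin.val_succ] at h1
        simp only [Fin.coe_castSucc]
        rcases Nat.lt_or_ge j.val (t.val + 1) with hj | hj
        · omega
        · exfalso
          have : j = t.succ := by
            apply Fin.ext
            simp only [Fin.val_succ]
            omega
          rw [this] at h3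
          exact h h3
      · rintro ⟨h1, h2, h3⟩
        refine ⟨?_, h2, h3⟩
        rw [Fin.le_def] at h1 ⊢
        simp only [Fin.coe_castSucc] at h1
        simp only [Fin.val_succ]
        omega
    show min _ M.T = _
    rw [heq, if_neg h]
    show min _ M.T = min (min _ M.T + 0) M.T
    omega

lemma cnt_compat (M : MDP X A) (xs : Fin (M.T+1) → X) (t : Fin M.T) :
    cnt M (fun i : Fin (t.1+1) => xs (Fin.castLE (Nat.succ_le_succ (le_of_lt t.isLt)) i))
        (Fin.last t.1)
      = cnt M xs t.castSucc := by
  apply Fin.ext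
  show min _ M.T = min _ M.T
  congr 1
  apply Finset.card_nbij'
    (i := fun (j : Fin (t.1+1)) =>
      (Fin.castLE (Nat.succ_le_succ (le_of_lt t.isLt)) j : Fin (M.T+1)))
    (j := fun (j : Fin (M.T+1)) => (⟨min j.val t.1, by omega⟩ : Fin (t.1+1)))
  · intro a ha
    simp only [Finset.mem_coe, Finset.mem_filter, Finset.mem_univ, true_and] at ha ⊢
    obtain ⟨h1, h2, h3⟩ := ha
    refine ⟨?_, ?_, h3⟩
    · rw [Fin.le_def]
      simp only [Fin.coe_castSucc, Fin.coe_castLE]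
      have := a.isLt
      omega
    · intro h
      apply h2
      apply Fin.ext
      have := congrArg Fin.val h
      simpa using this
  · intro a ha
    simp only [Finset.mem_coe, Finset.mem_filter, Finset.mem_univ, true_and] at ha ⊢
    obtain ⟨h1, h2, h3⟩ := ha
    have hv : a.val ≤ t.1 := by
      rw [Fin.le_def] at h1
      simpa using h1
    have hv0 : a.val ≠ 0 := fun h => h2 (Fin.ext (by simpa using h))
    refine ⟨?_, ?_, ?_⟩
    · rw [Fin.le_def]
      simp only [Fin.val_last]
      omega
    · intro h
      have := congrArg Fin.val h
      simp only [Fin.val_zero] at this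
      omega
    · convert h3 using 2
      apply Fin.ext
      simp only [Fin.coe_castLE]
      omega
  · intro a ha
    simp only [Finset.mem_coe, Finset.mem_filter, Finset.mem_univ, true_and] at ha
    apply Fin.ext
    simp only [Fin.coe_castLE]
    have := a.isLt
    omega
  · intro a ha
    simp only [Finset.mem_coe, Finset.mem_filter, Finset.mem_univ, true_and, Fin.le_def,
      Fin.coe_castSucc] at ha
    apply Fin.ext
    simp only [Fin.coe_castLE]
    omega
end Part9
section Part10
variable {X A : Type} [Fintype X] [Fintype A]

def phi (M : MDP X A) (τ : Traj M) : Traj (countAug M) :=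
  (fun i => (τ.1 i, cnt M τ.1 i), τ.2)

lemma countAug_P (M : MDP X A) (s : X × Fin (M.T+1)) (a : A) (s' : X × Fin (M.T+1)) :
    (countAug M).P s a s'
      = if s'.2 = (⟨min (s.2.val + (if s'.1 ∈ M.Xa then 1 else 0)) M.T,
          by omega⟩ : Fin (M.T + 1)) then M.P s.1 a s'.1 else 0 := rfl

lemma phi_cond (M : MDP X A) (τ : Traj M) (t : Fin M.T) :
    ((phi M τ).1 t.succ).2
      = ⟨min ((((phi M τ).1 t.castSucc).2).val +
          (if ((phi M τ).1 t.succ).1 ∈ M.Xa then 1 else 0)) M.T, by omega⟩ := by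
  apply Fin.ext
  exact cnt_succ M τ.1 t

lemma traj_valid (M : MDP X A) (q : HistPolicy (countAug M)) (x0 : X) (σ : Traj (countAug M))
    (h : trajProb (countAug M) q (x0, (0 : Fin (M.T+1))) σ ≠ 0) :
    σ = phi M (fun i => (σ.1 i).1, σ.2) := by
  unfold trajProb at h
  rw [mul_ne_zero_iff] at h
  obtain ⟨h0, hprod⟩ := h
  have h0' : σ.1 0 = (x0, (0 : Fin (M.T+1))) := by
    by_cases hc : σ.1 0 = (x0, (0 : Fin (M.T+1)))
    · exact hc
    · simp [hc] at h0
  rw [Finset.prod_ne_zero_iff] at hprod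
  have hcond : ∀ t : Fin M.T, (σ.1 t.succ).2
      = ⟨min (((σ.1 t.castSucc).2).val + (if (σ.1 t.succ).1 ∈ M.Xa then 1 else 0)) M.T,
          by omega⟩ := by
    intro t
    have h2 := hprod t (Finset.mem_univ t)
    rw [mul_ne_zero_iff] at h2
    have hP := h2.2
    rw [countAug_P] at hP
    by_cases hc : (σ.1 t.succ).2
        = (⟨min (((σ.1 t.castSucc).2).val + (if (σ.1 t.succ).1 ∈ M.Xa then 1 else 0)) M.T,
            by omega⟩ : Fin (M.T+1))
    · exact hc
    · exact absurd (if_neg hc) hP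
  have hsnd : ∀ i : Fin (M.T+1), (σ.1 i).2 = cnt M (fun j => (σ.1 j).1) i := by
    intro i
    induction i using Fin.induction with
    | zero =>
      exact (congrArg Prod.snd h0').trans (cnt_zero M _).symm
    | succ t ih =>
      apply Fin.ext
      rw [hcond t]
      show min ((((σ.1 t.castSucc).2)).val + _) M.T = _
      rw [ih]
      exact (cnt_succ M (fun j => (σ.1 j).1) t).symm
  have h1 : σ.1 = fun i => ((σ.1 i).1, cnt M (fun j => (σ.1 j).1) i) := by
    funext i
    exact Prod.ext rfl (hsnd i)
  exact Prod.ext h1 rfl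

set_option maxHeartbeats 4000000 in
lemma sum_traj_countAug (M : MDP X A) (G : Traj (countAug M) → ℝ)
    (hG : ∀ σ : Traj (countAug M), σ ≠ phi M ((fun i => (σ.1 i).1), σ.2) → G σ = 0) :
    ∑ σ : Traj (countAug M), G σ = ∑ τ : Traj M, G (phi M τ) := by
  calc ∑ σ : Traj (countAug M), G σ
      = ∑ f : Fin (M.T+1) → X × Fin (M.T+1), ∑ as : Fin M.T → A, G (f, as) :=
        Fintype.sum_prod_type _
    _ = ∑ pq : (Fin (M.T+1) → X) × (Fin (M.T+1) → Fin (M.T+1)), ∑ as : Fin M.T → A,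
          G ((Equiv.arrowProdEquivProdArrow (Fin (M.T+1)) (fun _ => X) (fun _ => Fin (M.T+1))).symm pq, as) :=
        (Equiv.sum_comp (Equiv.arrowProdEquivProdArrow (Fin (M.T+1)) (fun _ => X) (fun _ => Fin (M.T+1))).symm
          (fun f => ∑ as : Fin M.T → A, G (f, as))).symm
    _ = ∑ xs : Fin (M.T+1) → X, ∑ ys : Fin (M.T+1) → Fin (M.T+1), ∑ as : Fin M.T → A,
          G ((fun i => (xs i, ys i)), as) := Fintype.sum_prod_type _
    _ = ∑ xs : Fin (M.T+1) → X, ∑ as : Fin M.T → A, G (phi M (xs, as)) := by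
        refine Finset.sum_congr rfl fun xs _ => ?_
        rw [Finset.sum_comm]
        refine Finset.sum_congr rfl fun as _ => ?_
        rw [Finset.sum_eq_single_of_mem (cnt M xs) (Finset.mem_univ _)]
        · rfl
        · intro ys _ hneq
          apply hG
          intro hcontra
          apply hneq
          funext i
          exact congrArg (fun σ : Traj (countAug M) => (σ.1 i).2) hcontra
    _ = ∑ τ : Traj M, G (phi M τ) :=
        (Fintype.sum_prod_type (fun τ : Traj M => G (phi M τ))).symm
end Part10
section Part11
variable {X A : Type} [Fintype X] [Fintype A]

def liftPolicy (M : MDP X A) (p : HistPolicy M) : HistPolicy (countAug M) where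
  π t xs as a := p.π t (fun i => (xs i).1) as a
  nonneg t xs as a := p.nonneg t (fun i => (xs i).1) as a
  sum_one t xs as := p.sum_one t (fun i => (xs i).1) as

def pullPolicy (M : MDP X A) (q : HistPolicy (countAug M)) : HistPolicy M where
  π t xs as a := q.π t (fun i => (xs i, cnt M xs i)) as a
  nonneg t xs as a := q.nonneg t (fun i => (xs i, cnt M xs i)) as a
  sum_one t xs as := q.sum_one t (fun i => (xs i, cnt M xs i)) as

lemma trajProb_lift (M : MDP X A) (p : HistPolicy M) (x0 : X) (τ : Traj M) :
    trajProb (countAug M) (liftPolicy M p) (x0, (0 : Fin (M.T+1))) (phi M τ)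
      = trajProb M p x0 τ := by
  unfold trajProb
  congr 1
  · by_cases hc : τ.1 0 = x0
    · rw [if_pos hc, if_pos]
      show (τ.1 0, cnt M τ.1 0) = (x0, (0 : Fin (M.T+1)))
      rw [hc, cnt_zero]
    · rw [if_neg hc, if_neg]
      intro h
      exact hc (congrArg Prod.fst h)
  · apply Finset.prod_congr rfl
    intro t _
    congr 1
    rw [countAug_P]
    exact if_pos (phi_cond M τ t)

lemma trajProb_pull (M : MDP X A) (q : HistPolicy (countAug M)) (hq : IsMarkov q)
    (x0 : X) (τ : Traj M) :
    trajProb M (pullPolicy M q) x0 τ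
      = trajProb (countAug M) q (x0, (0 : Fin (M.T+1))) (phi M τ) := by
  unfold trajProb
  congr 1
  · by_cases hc : τ.1 0 = x0
    · rw [if_pos hc, if_pos]
      show (τ.1 0, cnt M τ.1 0) = (x0, (0 : Fin (M.T+1)))
      rw [hc, cnt_zero]
    · rw [if_neg hc, if_neg]
      intro h
      exact hc (congrArg Prod.fst h)
  · apply Finset.prod_congr rfl
    intro t _
    congr 1
    · show q.π t (fun i => (histStates τ t i, cnt M (histStates τ t) i)) (histActs τ t) (τ.2 t)
        = q.π t (histStates (phi M τ) t) (histActs (phi M τ) t) ((phi M τ).2 t)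
      refine congrFun (hq t (fun i => (histStates τ t i, cnt M (histStates τ t) i))
        (histStates (phi M τ) t) (histActs τ t) (histActs (phi M τ) t) ?_) (τ.2 t)
      apply Prod.ext
      · rfl
      · show cnt M (histStates τ t) (Fin.last t.1) = _
        exact (cnt_compat M τ.1 t).trans (congrArg (cnt M τ.1) (Fin.ext rfl))
    · rw [countAug_P]
      exact (if_pos (phi_cond M τ t)).symm

lemma trajProb_ne_zero_first (M : MDP X A) (p : HistPolicy M) (x0 : X) (τ : Traj M)
    (h : trajProb M p x0 τ ≠ 0) : τ.1 0 = x0 := by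
  unfold trajProb at h
  rw [mul_ne_zero_iff] at h
  by_cases hc : τ.1 0 = x0
  · exact hc
  · rw [if_neg hc] at h
    exact absurd rfl h.1

lemma phi_last_cnt (M : MDP X A) (x0 : X) (hx0 : x0 ∉ M.Xa) (τ : Traj M) (h0 : τ.1 0 = x0) :
    (((phi M τ).1 (Fin.last (countAug M).T)).2).val
      = (Finset.univ.filter fun t : Fin (M.T + 1) => τ.1 t ∈ M.Xa).card := by
  show min ((Finset.univ.filter
      (fun j : Fin (M.T+1) => j ≤ Fin.last M.T ∧ j ≠ 0 ∧ τ.1 j ∈ M.Xa)).card) M.T = _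
  have hsub : (Finset.univ.filter
        (fun j : Fin (M.T+1) => j ≤ Fin.last M.T ∧ j ≠ 0 ∧ τ.1 j ∈ M.Xa))
      = Finset.univ.filter (fun t : Fin (M.T + 1) => τ.1 t ∈ M.Xa) := by
    ext j
    simp only [Finset.mem_filter, Finset.mem_univ, true_and]
    constructor
    · rintro ⟨_, _, h3⟩
      exact h3
    · intro h3
      refine ⟨Fin.le_last _, ?_, h3⟩
      intro hj0
      rw [hj0, h0] at h3
      exact hx0 h3
  rw [hsub]
  have hcard : (Finset.univ.filter (fun t : Fin (M.T + 1) => τ.1 t ∈ M.Xa)).card ≤ M.T := by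
    have hsubset : (Finset.univ.filter (fun t : Fin (M.T + 1) => τ.1 t ∈ M.Xa))
        ⊆ Finset.univ.erase 0 := by
      intro j hj
      rw [Finset.mem_filter] at hj
      apply Finset.mem_erase.mpr
      refine ⟨?_, Finset.mem_univ _⟩
      intro hj0
      rw [hj0, h0] at hj
      exact hx0 hj.2
    calc (Finset.univ.filter (fun t : Fin (M.T + 1) => τ.1 t ∈ M.Xa)).card
        ≤ (Finset.univ.erase (0 : Fin (M.T+1))).card := Finset.card_le_card hsubset
      _ = M.T := by
          rw [Finset.card_erase_of_mem (Finset.mem_univ _), Finset.card_univ, Fintype.card_fin]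
          omega
  omega
end Part11
section Part12
variable {X A : Type} [Fintype X] [Fintype A]

lemma probEvent_corr (M : MDP X A) (Q : HistPolicy (countAug M)) (P : HistPolicy M)
    (x0 : X) (hx0 : x0 ∉ M.Xa)
    (hTP : ∀ τ : Traj M, trajProb (countAug M) Q (x0, (0 : Fin (M.T+1))) (phi M τ)
      = trajProb M P x0 τ) (i : ℕ) :
    probEvent (countAug M) Q (x0, (0 : Fin (M.T+1)))
        (fun σ => i ≤ ((σ.1 (Fin.last (countAug M).T)).2).val)
      = probEvent M P x0 (fun τ =>
          i ≤ (Finset.univ.filter fun t : Fin (M.T + 1) => τ.1 t ∈ M.Xa).card) := by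
  unfold probEvent
  have hG : ∀ σ : Traj (countAug M), σ ≠ phi M ((fun i => (σ.1 i).1), σ.2) →
      (@ite ℝ (i ≤ ((σ.1 (Fin.last (countAug M).T)).2).val) (Classical.propDecidable _)
        (trajProb (countAug M) Q (x0, (0 : Fin (M.T+1))) σ) 0) = 0 := by
    intro σ hne
    have hz : trajProb (countAug M) Q (x0, (0 : Fin (M.T+1))) σ = 0 := by
      by_contra h
      exact hne (traj_valid M Q x0 σ h)
    rw [hz]
    simp
  refine (sum_traj_countAug M (fun σ =>
      @ite ℝ (i ≤ ((σ.1 (Fin.last (countAug M).T)).2).val) (Classical.propDecidable _)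
        (trajProb (countAug M) Q (x0, (0 : Fin (M.T+1))) σ) 0) hG).trans ?_
  refine Finset.sum_congr rfl fun τ _ => ?_
  rw [hTP τ]
  by_cases hz : trajProb M P x0 τ = 0
  · rw [hz]
    simp
  · have h0 := trajProb_ne_zero_first M P x0 τ hz
    rw [phi_last_cnt M x0 hx0 τ h0]

lemma J_corr (M : MDP X A) (Q : HistPolicy (countAug M)) (P : HistPolicy M) (x0 : X)
    (hTP : ∀ τ : Traj M, trajProb (countAug M) Q (x0, (0 : Fin (M.T+1))) (phi M τ)
      = trajProb M P x0 τ) :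
    J (countAug M) Q (x0, (0 : Fin (M.T+1))) = J M P x0 := by
  unfold J
  have hG : ∀ σ : Traj (countAug M), σ ≠ phi M ((fun i => (σ.1 i).1), σ.2) →
      trajProb (countAug M) Q (x0, (0 : Fin (M.T+1))) σ *
        (∑ t : Fin (countAug M).T, (countAug M).r t (σ.1 t.castSucc) (σ.2 t) +
          (countAug M).rT (σ.1 (Fin.last (countAug M).T))) = 0 := by
    intro σ hne
    have hz : trajProb (countAug M) Q (x0, (0 : Fin (M.T+1))) σ = 0 := by
      by_contra h
      exact hne (traj_valid M Q x0 σ h)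
    rw [hz, zero_mul]
  refine (sum_traj_countAug M (fun σ =>
      trajProb (countAug M) Q (x0, (0 : Fin (M.T+1))) σ *
        (∑ t : Fin (countAug M).T, (countAug M).r t (σ.1 t.castSucc) (σ.2 t) +
          (countAug M).rT (σ.1 (Fin.last (countAug M).T)))) hG).trans ?_
  refine Finset.sum_congr rfl fun τ _ => ?_
  rw [hTP τ]
  rfl
end Part12
/-- The optimal attack impact over history-dependent policies
under the multi-alarm chance constraints equals the optimal impact over Markov
policies of the counting augmented MDP under final-counter constraints. -/
theorem impact_hist_eq_countAug_markov [Nonempty X] [Nonempty A]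
    (M : MDP X A) (x0 : X) (hx0 : x0 ∉ M.Xa)
    (Δ : ℕ → ℝ) (hΔ : ∀ i : ℕ, 1 ≤ i → i ≤ M.T → Δ i ∈ Set.Icc (0 : ℝ) 1) :
    sSup {v : ℝ | ∃ p : HistPolicy M,
        (∀ i : ℕ, 1 ≤ i → i ≤ M.T →
          probEvent M p x0 (fun τ =>
            i ≤ (Finset.univ.filter fun t : Fin (M.T + 1) => τ.1 t ∈ M.Xa).card)
            ≤ Δ i) ∧
        v = J M p x0} =
    sSup {v : ℝ | ∃ q : HistPolicy (countAug M), IsMarkov q ∧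
        (∀ i : ℕ, 1 ≤ i → i ≤ M.T →
          probEvent (countAug M) q (x0, 0)
            (fun σ => i ≤ ((σ.1 (Fin.last (countAug M).T)).2).val) ≤ Δ i) ∧
        v = J (countAug M) q (x0, 0)} := by
  congr 1
  ext v
  simp only [Set.mem_setOf_eq]
  constructor
  · rintro ⟨p, hc, rfl⟩
    obtain ⟨q, hqM, hqJ, hqE⟩ :=
      exists_markov (countAug M) ((x0, (0 : Fin (M.T+1)))) (liftPolicy M p)
    refine ⟨q, hqM, ?_, ?_⟩
    · intro i hi1 hi2
      calc probEvent (countAug M) q (x0, 0)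
            (fun σ => i ≤ ((σ.1 (Fin.last (countAug M).T)).2).val)
          = probEvent (countAug M) (liftPolicy M p) (x0, (0 : Fin (M.T+1)))
              (fun σ => i ≤ ((σ.1 (Fin.last (countAug M).T)).2).val) :=
            hqE (fun s => i ≤ s.2.val)
        _ = probEvent M p x0 (fun τ =>
              i ≤ (Finset.univ.filter fun t : Fin (M.T + 1) => τ.1 t ∈ M.Xa).card) :=
            probEvent_corr M (liftPolicy M p) p x0 hx0 (trajProb_lift M p x0) i
        _ ≤ Δ i := hc i hi1 hi2
    · exact (hqJ.trans (J_corr M (liftPolicy M p) p x0 (trajProb_lift M p x0))).symm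
  · rintro ⟨q, hqM, hc, rfl⟩
    refine ⟨pullPolicy M q, ?_, ?_⟩
    · intro i hi1 hi2
      have h := probEvent_corr M q (pullPolicy M q) x0 hx0
        (fun τ => (trajProb_pull M q hqM x0 τ).symm) i
      rw [← h]
      exact hc i hi1 hi2
    · exact (J_corr M q (pullPolicy M q) x0
        (fun τ => (trajProb_pull M q hqM x0 τ).symm))

end
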